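/- Let G be a directed graph on n nodes such that for every node i, Ĝ(i) contains a target. Then each node k of G is a target in exactly one of the n graphs Ĝ(1), …, Ĝ(n). -/
import Mathlib


open Finset

/-- A target of a directed graph (`G a b` means edge `a → b`) is a node
receiving an edge from every other node. -/
def isTarget {n : ℕ} (G : Fin n → Fin n → Prop) (t : Fin n) : Prop :=
  ∀ j, j ≠ t → G j t

/-- The node-complement `Ĝ(i)`: complement all outgoing edges of `i`,
leaving the rest of the graph intact. -/
def hatG {n : ℕ} (G : Fin n → Fin n → Prop) (i : Fin n) : Fin n → Fin n → Prop :=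
  fun a b => if a = i then (b ≠ i ∧ ¬ G i b) else G a b

lemma key1 {n : ℕ} (G : Fin n → Fin n → Prop) {k i : Fin n} (hik : i ≠ k)
    (ht : isTarget (hatG G i) k) : ¬ G i k := by
  have := ht i hik
  simp only [hatG, if_pos rfl] at this
  exact this.2

lemma key2 {n : ℕ} (G : Fin n → Fin n → Prop) {k i j : Fin n} (hji : j ≠ i) (hjk : j ≠ k)
    (ht : isTarget (hatG G i) k) : G j k := by
  have := ht j hjk
  simpa [hatG, hji] using this

lemma uniq {n : ℕ} (G : Fin n → Fin n → Prop) {k i1 i2 : Fin n}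
    (h1 : isTarget (hatG G i1) k) (h2 : isTarget (hatG G i2) k) : i1 = i2 := by
  by_contra hne
  rcases eq_or_ne i1 k with e | e
  · subst e
    exact key1 G (fun h => hne h.symm) h2
      (key2 G (fun h => hne h.symm) (fun h => hne h.symm) h1)
  · rcases eq_or_ne i2 k with e2 | e2
    · subst e2
      exact key1 G e h1 (key2 G hne e h2)
    · exact key1 G e h1 (key2 G hne e h2)

theorem stmt_8 {n : ℕ} (G : Fin n → Fin n → Prop)
    (hirr : ∀ i, ¬ G i i)
    (h : ∀ i : Fin n, ∃ t, isTarget (hatG G i) t) :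
    ∀ k : Fin n, ∃! i : Fin n, isTarget (hatG G i) k := by
  intro k
  classical
  choose f hf using h
  have finj : Function.Injective f := by
    intro a b hab
    exact uniq G (hf a) (hab ▸ hf b)
  have fsurj : Function.Surjective f := Finite.surjective_of_injective finj
  obtain ⟨i, hi⟩ := fsurj k
  exact ⟨i, hi ▸ hf i, fun j hj => uniq G hj (hi ▸ hf i)⟩
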